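/- Fix M ≥ 2 and p > 0. Consider the label vectors (in R^{2M-1}): prototype 0 has label with value 3/(2M+1) on class a = 0 and value 2/(2M+1) on each of the M−1 'midpoint' classes; each outer prototype i has label with value 3/5 on its own class b_i and 2/5 on the midpoint class c_i. On the segment joining prototype 0 to outer prototype i at distance p, parametrized by distance d ∈ (0, p) from prototype 0, the classifier argmax of [y0/d + y_i/(p−d)] predicts class a for d < 5p/(4M+7), class c_i for 5p/(4M+7) < d < 10p/(2M+11), and class b_i for d > 10p/(2M+11). -/

import Mathlib

/-- Central prototype label over classes `0, 1, ..., 2M-2`: class `0` is `a`,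
classes `1, ..., M-1` are the outer classes `b_i`, classes `M, ..., 2M-2`
are the midpoint classes `c_i` (class `c_i` has index `M-1+i`). -/
noncomputable def centralLabel (M : ℕ) (j : ℕ) : ℝ :=
  if j = 0 then 3 / (2 * M + 1)
  else if M ≤ j ∧ j ≤ 2 * M - 2 then 2 / (2 * M + 1) else 0

/-- Label of outer prototype `i`: value `3/5` on its own class `b_i` (index `i`)
and `2/5` on its midpoint class `c_i` (index `M-1+i`). -/
noncomputable def outerLabel (M i : ℕ) (j : ℕ) : ℝ :=
  if j = i then 3 / 5 else if j = M - 1 + i then 2 / 5 else 0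

/-- Weighted label on the segment from the central prototype to outer prototype `i`,
at distance `d` from the center, where the two prototypes are `p` apart. -/
noncomputable def segLabel (M i : ℕ) (p d : ℝ) (j : ℕ) : ℝ :=
  centralLabel M j / d + outerLabel M i j / (p - d)

theorem stmt_8 (M : ℕ) (hM : 2 ≤ M) (p : ℝ) (hp : 0 < p)
    (i : ℕ) (hi1 : 1 ≤ i) (hi2 : i ≤ M - 1) (d : ℝ) (hd0 : 0 < d) (hdp : d < p) :
    (d < 5 * p / (4 * M + 7) →
      ∀ j ≤ 2 * M - 2, j ≠ 0 → segLabel M i p d j < segLabel M i p d 0) ∧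
    (5 * p / (4 * M + 7) < d → d < 10 * p / (2 * M + 11) →
      ∀ j ≤ 2 * M - 2, j ≠ M - 1 + i → segLabel M i p d j < segLabel M i p d (M - 1 + i)) ∧
    (10 * p / (2 * M + 11) < d →
      ∀ j ≤ 2 * M - 2, j ≠ i → segLabel M i p d j < segLabel M i p d i) := by
  have hiM : i < M := by omega
  have hi0 : i ≠ 0 := by omega
  have hc1 : M ≤ M - 1 + i := by omega
  have hc2 : M - 1 + i ≤ 2 * M - 2 := by omega
  have hc0 : M - 1 + i ≠ 0 := by omega
  have hci : M - 1 + i ≠ i := by omega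
  have he : 0 < p - d := by linarith
  have hm : (2:ℝ) ≤ (M:ℝ) := by exact_mod_cast hM
  have hd' : (0:ℝ) < (2*(M:ℝ)+1)*d := by positivity
  have he' : (0:ℝ) < 5*(p-d) := by linarith
  have v0 : segLabel M i p d 0 = 3 / ((2*(M:ℝ)+1)*d) := by
    simp [segLabel, centralLabel, outerLabel, Ne.symm hi0, Ne.symm hc0, div_div]
  have vi : segLabel M i p d i = 3 / (5*(p-d)) := by
    unfold segLabel centralLabel outerLabel
    rw [if_neg hi0, if_neg (by omega : ¬ (M ≤ i ∧ i ≤ 2*M-2)), if_pos rfl]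
    rw [zero_div, zero_add, div_div]
  have vc : segLabel M i p d (M-1+i) = 2/((2*(M:ℝ)+1)*d) + 2/(5*(p-d)) := by
    simp [segLabel, centralLabel, outerLabel, hc0, hci, hc1, hc2, div_div]
    rw [if_neg (by omega : ¬ (M - 1 = 0 ∧ i = 0)), if_neg (by omega : M - 1 ≠ 0), div_div, div_div]
  have vgen : ∀ j, j ≠ 0 → j ≠ i → j ≠ M-1+i →
      segLabel M i p d j ≤ 2/((2*(M:ℝ)+1)*d) := by
    intro j h0 h1 h2
    unfold segLabel centralLabel outerLabel
    rw [if_neg h0, if_neg h1, if_neg h2]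
    by_cases hMj : M ≤ j ∧ j ≤ 2*M-2
    · rw [if_pos hMj, div_div]
      simp
    · rw [if_neg hMj]
      simp
      positivity
  refine ⟨?_, ?_, ?_⟩
  · intro h1 j hj hj0
    have key1 : 2*((2*(M:ℝ)+1)*d) < 5*(p-d) := by
      have := (lt_div_iff₀ (by positivity : (0:ℝ) < 4*(M:ℝ)+7)).mp h1
      linarith
    rw [v0]
    have hmid : 2/((2*(M:ℝ)+1)*d) < 3/((2*(M:ℝ)+1)*d) := by
      rw [div_lt_div_iff₀ hd' hd']; linarith
    by_cases hji : j = i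
    · subst hji; rw [vi, div_lt_div_iff₀ he' hd']; linarith
    · by_cases hjc : j = M-1+i
      · subst hjc; rw [vc]
        have h2 : 2/(5*(p-d)) < 1/((2*(M:ℝ)+1)*d) := by
          rw [div_lt_div_iff₀ he' hd']; linarith
        have h3 : 3/((2*(M:ℝ)+1)*d) = 2/((2*(M:ℝ)+1)*d) + 1/((2*(M:ℝ)+1)*d) := by ring
        linarith
      · exact lt_of_le_of_lt (vgen j hj0 hji hjc) hmid
  · intro h2a h2b j hj hjc
    have key2a : 5*(p-d) < 2*((2*(M:ℝ)+1)*d) := by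
      have := (div_lt_iff₀ (by positivity : (0:ℝ) < 4*(M:ℝ)+7)).mp h2a
      linarith
    have key2b : (2*(M:ℝ)+1)*d < 2*(5*(p-d)) := by
      have := (lt_div_iff₀ (by positivity : (0:ℝ) < 2*(M:ℝ)+11)).mp h2b
      linarith
    rw [vc]
    have hpos : (0:ℝ) < 2/(5*(p-d)) := by positivity
    by_cases hj0 : j = 0
    · subst hj0; rw [v0]
      have h2 : 1/((2*(M:ℝ)+1)*d) < 2/(5*(p-d)) := by
        rw [div_lt_div_iff₀ hd' he']; linarith
      have h3 : 3/((2*(M:ℝ)+1)*d) = 2/((2*(M:ℝ)+1)*d) + 1/((2*(M:ℝ)+1)*d) := by ring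
      linarith
    · by_cases hji : j = i
      · subst hji; rw [vi]
        have h2 : 1/(5*(p-d)) < 2/((2*(M:ℝ)+1)*d) := by
          rw [div_lt_div_iff₀ he' hd']; linarith
        have h3 : 3/(5*(p-d)) = 2/(5*(p-d)) + 1/(5*(p-d)) := by ring
        linarith
      · have := vgen j hj0 hji hjc
        linarith
  · intro h3 j hj hji
    have key3 : 2*(5*(p-d)) < (2*(M:ℝ)+1)*d := by
      have := (div_lt_iff₀ (by positivity : (0:ℝ) < 2*(M:ℝ)+11)).mp h3
      linarith
    rw [vi]
    by_cases hj0 : j = 0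
    · subst hj0; rw [v0, div_lt_div_iff₀ hd' he']
      linarith
    · by_cases hjc : j = M-1+i
      · subst hjc; rw [vc]
        have h2 : 2/((2*(M:ℝ)+1)*d) < 1/(5*(p-d)) := by
          rw [div_lt_div_iff₀ hd' he']; linarith
        have h3 : 3/(5*(p-d)) = 2/(5*(p-d)) + 1/(5*(p-d)) := by ring
        linarith
      · have hmid : 2/((2*(M:ℝ)+1)*d) < 3/(5*(p-d)) := by
          rw [div_lt_div_iff₀ hd' he']; linarith
        exact lt_of_le_of_lt (vgen j hj0 hji hjc) hmid
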